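/- arXiv:1806.09311 — 2 statements merged into one kernel-verified Lean document; each statement's English description precedes it below -/
import Mathlib

section
/- Lemma 3.2(i) (coercivity of the real part of the modal PML form): Assume σ₀ ≥ √3. If ν ∈ ℝ satisfies ν² ≥ k²R² + λ k R̂², then for every admissible v, Re a_ν(v,v) ≥ ∫₀^{R̂} ( (1/(1+σ₀²)) r |v′(r)|² + λ k r |v(r)|² ) dr. -/
open MeasureTheory

noncomputable section

/-- The PML medium property `σ(r)`: `0` for `0 ≤ r ≤ R` and `σ₀` for `r > R`. -/
def sigPML (σ₀ R r : ℝ) : ℝ := if r ≤ R then 0 else σ₀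

/-- `δ(r) = 0` for `0 ≤ r ≤ R` and `δ(r) = σ₀(r−R)/r` for `r > R`. -/
def delPML (σ₀ R r : ℝ) : ℝ := if r ≤ R then 0 else σ₀ * (r - R) / r

/-- `α(r) = 1 + iσ(r)`. -/
def alphaPML (σ₀ R r : ℝ) : ℂ := 1 + Complex.I * sigPML σ₀ R r

/-- `β(r) = 1 + iδ(r)`. -/
def betaPML (σ₀ R r : ℝ) : ℂ := 1 + Complex.I * delPML σ₀ R r

/-- `λ = R^{3/2} / (3 σ₀ R̂² L^{1/2})` with `L = R̂ − R`. -/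
def lamPML (σ₀ R Rh : ℝ) : ℝ := R ^ ((3 : ℝ) / 2) / (3 * σ₀ * Rh ^ 2 * (Rh - R) ^ ((1 : ℝ) / 2))

/-- A function `v : (0, R̂] → ℂ` is admissible if it is locally absolutely continuous with
derivative `v′` and the integrals `∫₀^{R̂} r|v′|²`, `∫₀^{R̂} (1/r)|v|²`, `∫₀^{R̂} r|v|²` are
all finite. -/
def Admissible (Rh : ℝ) (v v' : ℝ → ℂ) : Prop :=
  AEStronglyMeasurable v' (volume.restrict (Set.Ioc 0 Rh)) ∧
  (∀ a b : ℝ, 0 < a → a ≤ b → b ≤ Rh → v b - v a = ∫ t in a..b, v' t) ∧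
  IntegrableOn (fun r => r * ‖v' r‖ ^ 2) (Set.Ioc 0 Rh) ∧
  IntegrableOn (fun r => ‖v r‖ ^ 2 / r) (Set.Ioc 0 Rh) ∧
  IntegrableOn (fun r => r * ‖v r‖ ^ 2) (Set.Ioc 0 Rh)

/-- The modal PML sesquilinear form evaluated at `(v, v)`:
`a_ν(v,v) = ∫₀^{R̂} ((β/α) r |v′|² + ((ν²/r)(α/β) − k²αβr) |v|²) dr`. -/
def aForm (k σ₀ R Rh ν : ℝ) (v v' : ℝ → ℂ) : ℂ :=
  ∫ r in Set.Ioc 0 Rh,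
    ((betaPML σ₀ R r / alphaPML σ₀ R r) * (r : ℂ) * (‖v' r‖ ^ 2 : ℝ) +
      (((ν ^ 2 : ℝ) / r) * (alphaPML σ₀ R r / betaPML σ₀ R r) -
        (k ^ 2 : ℝ) * alphaPML σ₀ R r * betaPML σ₀ R r * r) * (‖v r‖ ^ 2 : ℝ))

lemma re_formula (σ₀ R r ν k c1 c2 : ℝ) (hr : r ≠ 0) :
    ((betaPML σ₀ R r / alphaPML σ₀ R r) * (r : ℂ) * (c1 : ℝ) +
      (((ν ^ 2 : ℝ) / r) * (alphaPML σ₀ R r / betaPML σ₀ R r) -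
        (k ^ 2 : ℝ) * alphaPML σ₀ R r * betaPML σ₀ R r * r) * (c2 : ℝ)).re =
    (1 + sigPML σ₀ R r * delPML σ₀ R r) / (1 + (sigPML σ₀ R r) ^ 2) * r * c1 +
      ((ν ^ 2 / r) * ((1 + sigPML σ₀ R r * delPML σ₀ R r) / (1 + (delPML σ₀ R r) ^ 2))
        - k ^ 2 * r * (1 - sigPML σ₀ R r * delPML σ₀ R r)) * c2 := by
  set s := sigPML σ₀ R r with hs
  set d := delPML σ₀ R r with hd
  have h1 : (1 : ℝ) + s ^ 2 ≠ 0 := by positivity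
  have h2 : (1 : ℝ) + d ^ 2 ≠ 0 := by positivity
  rw [← Complex.ofReal_div]
  simp only [alphaPML, betaPML, ← hs, ← hd, pow_two, Complex.div_re, Complex.div_im,
    Complex.normSq_apply, Complex.add_re, Complex.mul_re, Complex.add_im, Complex.mul_im,
    Complex.sub_re, Complex.ofReal_re, Complex.ofReal_im, Complex.I_re, Complex.I_im,
    Complex.one_re, Complex.one_im]
  ring_nf


section helpers
variable {σ₀ R Rh r : ℝ}

lemma sig_nonneg (hσ₀ : 0 ≤ σ₀) : 0 ≤ sigPML σ₀ R r := by
  unfold sigPML; split_ifs <;> simp [hσ₀]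

lemma sig_le (hσ₀ : 0 ≤ σ₀) : sigPML σ₀ R r ≤ σ₀ := by
  unfold sigPML; split_ifs <;> simp [hσ₀]

lemma del_nonneg (hσ₀ : 0 ≤ σ₀) (hR : 0 ≤ R) : 0 ≤ delPML σ₀ R r := by
  unfold delPML; split_ifs with h
  · exact le_refl 0
  · push_neg at h
    have hr : 0 < r := lt_of_le_of_lt hR h
    exact div_nonneg (mul_nonneg hσ₀ (by linarith)) hr.le

lemma del_le (hσ₀ : 0 ≤ σ₀) (hR : 0 ≤ R) (hr : 0 < r) : delPML σ₀ R r ≤ σ₀ := by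
  unfold delPML; split_ifs with h
  · exact hσ₀
  · push_neg at h
    rw [div_le_iff₀ hr]
    nlinarith

lemma lam_pos (hσ₀ : 0 < σ₀) (hR : 0 < R) (hRRh : R < Rh) : 0 < lamPML σ₀ R Rh := by
  have h1 : (0:ℝ) < R ^ ((3:ℝ)/2) := Real.rpow_pos_of_pos hR _
  have h2 : (0:ℝ) < (Rh - R) ^ ((1:ℝ)/2) := Real.rpow_pos_of_pos (by linarith) _
  have h3 : (0:ℝ) < Rh := by linarith
  exact div_pos h1 (by positivity)

end helpers

section helpers2
variable {k σ₀ R Rh ν r : ℝ}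

lemma coeffA (hσ₀ : 0 ≤ σ₀) (hR : 0 ≤ R) (hr : 0 < r) :
    1 / (1 + σ₀ ^ 2) ≤ (1 + sigPML σ₀ R r * delPML σ₀ R r) / (1 + (sigPML σ₀ R r) ^ 2) := by
  have h1 : 0 ≤ sigPML σ₀ R r := sig_nonneg hσ₀
  have h2 : sigPML σ₀ R r ≤ σ₀ := sig_le hσ₀
  have h3 : 0 ≤ delPML σ₀ R r := del_nonneg hσ₀ hR
  apply div_le_div₀ (by nlinarith) (by nlinarith) (by positivity) (by nlinarith)

lemma coeffB (hk : 0 < k) (hσ₀ : 0 < σ₀) (hσ3 : 3 ≤ σ₀ ^ 2) (hR : 0 < R) (hRRh : R < Rh)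
    (hν : k ^ 2 * R ^ 2 + lamPML σ₀ R Rh * k * Rh ^ 2 ≤ ν ^ 2) (hr : r ∈ Set.Ioc 0 Rh) :
    lamPML σ₀ R Rh * k * r ≤
      (ν ^ 2 / r) * ((1 + sigPML σ₀ R r * delPML σ₀ R r) / (1 + (delPML σ₀ R r) ^ 2)) -
        k ^ 2 * r * (1 - sigPML σ₀ R r * delPML σ₀ R r) := by
  obtain ⟨hr0, hrRh⟩ := hr
  have hlam : 0 < lamPML σ₀ R Rh := lam_pos hσ₀ hR hRRh
  set lam := lamPML σ₀ R Rh with hlamdef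
  by_cases hrR : r ≤ R
  · rw [show sigPML σ₀ R r = 0 from if_pos hrR, show delPML σ₀ R r = 0 from if_pos hrR]
    have h1 : (lam * k * r + k ^ 2 * r) * r ≤ ν ^ 2 := by
      have hr2 : r ^ 2 ≤ R ^ 2 := by nlinarith
      have hr2' : r ^ 2 ≤ Rh ^ 2 := by nlinarith
      have e1 : k ^ 2 * r ^ 2 ≤ k ^ 2 * R ^ 2 := by
        exact mul_le_mul_of_nonneg_left hr2 (by positivity)
      have e2 : lam * k * r ^ 2 ≤ lam * k * Rh ^ 2 := by
        have := mul_le_mul_of_nonneg_left hr2' (le_of_lt (mul_pos hlam hk))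
        nlinarith
      nlinarith
    have h2 : lam * k * r + k ^ 2 * r ≤ ν ^ 2 / r := (le_div_iff₀ hr0).mpr h1
    have h3 : ν ^ 2 / r * ((1 + 0 * 0) / (1 + 0 ^ 2)) = ν ^ 2 / r := by norm_num
    rw [h3]; linarith
  · push_neg at hrR
    rw [show sigPML σ₀ R r = σ₀ from if_neg (not_le.mpr hrR)]
    set d := delPML σ₀ R r with hd
    have hdr : d * r = σ₀ * (r - R) := by
      rw [hd]; unfold delPML; rw [if_neg (not_le.mpr hrR)]; field_simp
    have hd0 : 0 ≤ d := del_nonneg hσ₀.le hR.le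
    have hdσ : d ≤ σ₀ := del_le hσ₀.le hR.le hr0
    have hQ : 1 ≤ (1 + σ₀ * d) / (1 + d ^ 2) := by
      rw [le_div_iff₀ (by positivity)]
      nlinarith [mul_nonneg hd0 (sub_nonneg.mpr hdσ)]
    have hν2r : 0 ≤ ν ^ 2 / r := by positivity
    have step1 : ν ^ 2 / r ≤ ν ^ 2 / r * ((1 + σ₀ * d) / (1 + d ^ 2)) := by
      nth_rewrite 1 [← mul_one (ν ^ 2 / r)]
      exact mul_le_mul_of_nonneg_left hQ hν2r
    have key : r ^ 2 * (1 - σ₀ * d) ≤ R ^ 2 := by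
      have hfac : 0 ≤ (r - R) * ((σ₀ ^ 2 - 1) * r - R) := by
        apply mul_nonneg (by linarith)
        nlinarith [mul_nonneg (by linarith : (0:ℝ) ≤ σ₀ ^ 2 - 3) hr0.le]
      have hdr2 : σ₀ * (d * r) * r = σ₀ * (σ₀ * (r - R)) * r := by rw [hdr]
      nlinarith [hfac, hdr2]
    have step2 : (lam * k * r + k ^ 2 * r * (1 - σ₀ * d)) * r ≤ ν ^ 2 := by
      have hA : k ^ 2 * (r ^ 2 * (1 - σ₀ * d)) ≤ k ^ 2 * R ^ 2 :=
        mul_le_mul_of_nonneg_left key (by positivity)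
      have hB : lam * k * r ^ 2 ≤ lam * k * Rh ^ 2 := by
        have hr2' : r ^ 2 ≤ Rh ^ 2 := by nlinarith
        have := mul_le_mul_of_nonneg_left hr2' (le_of_lt (mul_pos hlam hk))
        nlinarith
      linarith [hA, hB, hν]
    have step3 : lam * k * r + k ^ 2 * r * (1 - σ₀ * d) ≤ ν ^ 2 / r := (le_div_iff₀ hr0).mpr step2
    linarith

lemma norm_one_add_I_mul_ge (x : ℝ) : 1 ≤ ‖(1 + Complex.I * x : ℂ)‖ := by
  have h : ‖(1 + Complex.I * x : ℂ)‖ ^ 2 = 1 + x ^ 2 := by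
    rw [← Complex.normSq_eq_norm_sq]
    simp [Complex.normSq_apply]
    ring
  nlinarith [norm_nonneg (1 + Complex.I * x : ℂ), sq_nonneg x]

lemma norm_one_add_I_mul_le (x : ℝ) : ‖(1 + Complex.I * x : ℂ)‖ ≤ 1 + |x| := by
  calc ‖(1 + Complex.I * x : ℂ)‖ ≤ ‖(1 : ℂ)‖ + ‖(Complex.I * x : ℂ)‖ := norm_add_le _ _
  _ = 1 + |x| := by simp

end helpers2

section main
variable {k σ₀ R Rh ν : ℝ}

lemma sig_meas (σ₀ R : ℝ) : Measurable (sigPML σ₀ R) :=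
  Measurable.ite (measurableSet_le measurable_id measurable_const) measurable_const
    measurable_const

lemma del_meas (σ₀ R : ℝ) : Measurable (delPML σ₀ R) :=
  Measurable.ite (measurableSet_le measurable_id measurable_const) measurable_const
    ((measurable_const.mul (measurable_id.sub measurable_const)).div measurable_id)

lemma alpha_meas (σ₀ R : ℝ) : Measurable (alphaPML σ₀ R) :=
  measurable_const.add
    (measurable_const.mul (Complex.measurable_ofReal.comp (sig_meas σ₀ R)))

lemma beta_meas (σ₀ R : ℝ) : Measurable (betaPML σ₀ R) :=
  measurable_const.add
    (measurable_const.mul (Complex.measurable_ofReal.comp (del_meas σ₀ R)))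

lemma norm_alpha_le (hσ₀ : 0 ≤ σ₀) (r : ℝ) : ‖alphaPML σ₀ R r‖ ≤ 1 + σ₀ := by
  refine (norm_one_add_I_mul_le _).trans ?_
  rw [abs_of_nonneg (sig_nonneg hσ₀)]
  linarith [sig_le (R := R) (r := r) hσ₀]

lemma norm_beta_le (hσ₀ : 0 ≤ σ₀) (hR : 0 ≤ R) {r : ℝ} (hr : 0 < r) :
    ‖betaPML σ₀ R r‖ ≤ 1 + σ₀ := by
  refine (norm_one_add_I_mul_le _).trans ?_
  rw [abs_of_nonneg (del_nonneg hσ₀ hR)]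
  linarith [del_le hσ₀ hR hr]

lemma norm_alpha_ge (σ₀ R r : ℝ) : 1 ≤ ‖alphaPML σ₀ R r‖ := norm_one_add_I_mul_ge _

lemma norm_beta_ge (σ₀ R r : ℝ) : 1 ≤ ‖betaPML σ₀ R r‖ := norm_one_add_I_mul_ge _

end main

/-- Lemma 3.2(i) (coercivity of the real part of the modal PML form): if `σ₀ ≥ √3` and
`ν² ≥ k²R² + λkR̂²`, then for every admissible `v`,
`Re a_ν(v,v) ≥ ∫₀^{R̂} ((1/(1+σ₀²)) r |v′|² + λ k r |v|²) dr`. -/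
theorem modal_form_re_coercive (k σ₀ R Rh ν : ℝ) (v v' : ℝ → ℂ)
    (hk : 0 < k) (hσ₀ : 0 < σ₀) (hσ₀' : Real.sqrt 3 ≤ σ₀) (hR : 0 < R) (hRRh : R < Rh)
    (hν : k ^ 2 * R ^ 2 + lamPML σ₀ R Rh * k * Rh ^ 2 ≤ ν ^ 2)
    (hv : Admissible Rh v v') :
    (∫ r in Set.Ioc 0 Rh,
        ((1 / (1 + σ₀ ^ 2)) * r * ‖v' r‖ ^ 2 + lamPML σ₀ R Rh * k * (r * ‖v r‖ ^ 2))) ≤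
      (aForm k σ₀ R Rh ν v v').re := by
  unfold aForm
  obtain ⟨hm', hFTC, hint1, hint2, hint3⟩ := hv
  have hσ3 : (3:ℝ) ≤ σ₀ ^ 2 := by
    nlinarith [Real.sq_sqrt (by norm_num : (0:ℝ) ≤ 3), Real.sqrt_nonneg 3]
  set F : ℝ → ℂ := fun r =>
    ((betaPML σ₀ R r / alphaPML σ₀ R r) * (r : ℂ) * (‖v' r‖ ^ 2 : ℝ) +
      (((ν ^ 2 : ℝ) / r) * (alphaPML σ₀ R r / betaPML σ₀ R r) -
        (k ^ 2 : ℝ) * alphaPML σ₀ R r * betaPML σ₀ R r * r) * (‖v r‖ ^ 2 : ℝ)) with hFdef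
  -- measurability of F
  have hc1m : AEStronglyMeasurable (fun r => (‖v' r‖ ^ 2 : ℝ))
      (volume.restrict (Set.Ioc 0 Rh)) :=
    (continuous_pow 2).comp_aestronglyMeasurable hm'.norm
  have hc2m : AEStronglyMeasurable (fun r => (‖v r‖ ^ 2 : ℝ))
      (volume.restrict (Set.Ioc 0 Rh)) := by
    have h := hint3.aestronglyMeasurable
    have h2 : AEStronglyMeasurable (fun r => r⁻¹ * (r * ‖v r‖ ^ 2))
        (volume.restrict (Set.Ioc 0 Rh)) :=
      measurable_inv.aestronglyMeasurable.mul h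
    refine h2.congr ?_
    filter_upwards [ae_restrict_mem measurableSet_Ioc] with r hr
    field_simp [ne_of_gt hr.1]
  have hFm : AEStronglyMeasurable F (volume.restrict (Set.Ioc 0 Rh)) := by
    apply AEStronglyMeasurable.add
    · exact (((beta_meas σ₀ R).div (alpha_meas σ₀ R)).mul
        Complex.measurable_ofReal).aestronglyMeasurable.mul
        (Complex.continuous_ofReal.comp_aestronglyMeasurable hc1m)
    · refine AEStronglyMeasurable.mul ?_
        (Complex.continuous_ofReal.comp_aestronglyMeasurable hc2m)
      apply Measurable.aestronglyMeasurable
      exact ((measurable_const.div Complex.measurable_ofReal).mul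
        ((alpha_meas σ₀ R).div (beta_meas σ₀ R))).sub
        (((measurable_const.mul (alpha_meas σ₀ R)).mul (beta_meas σ₀ R)).mul
          Complex.measurable_ofReal)
  -- pointwise norm bound
  set G : ℝ → ℝ := fun r => (1 + σ₀) * (r * ‖v' r‖ ^ 2) +
      (ν ^ 2 * (1 + σ₀) * (‖v r‖ ^ 2 / r) + k ^ 2 * (1 + σ₀) ^ 2 * (r * ‖v r‖ ^ 2)) with hGdef
  have hGint : IntegrableOn G (Set.Ioc 0 Rh) :=
    (hint1.const_mul _).add ((hint2.const_mul _).add (hint3.const_mul _))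
  have hbound : ∀ r ∈ Set.Ioc 0 Rh, ‖F r‖ ≤ G r := by
    intro r hr
    obtain ⟨hr0, hrRh⟩ := hr
    have hβα : ‖betaPML σ₀ R r / alphaPML σ₀ R r‖ ≤ 1 + σ₀ := by
      rw [norm_div]
      calc ‖betaPML σ₀ R r‖ / ‖alphaPML σ₀ R r‖ ≤ ‖betaPML σ₀ R r‖ / 1 :=
            div_le_div_of_nonneg_left (norm_nonneg _) one_pos (norm_alpha_ge σ₀ R r)
        _ ≤ 1 + σ₀ := by rw [div_one]; exact norm_beta_le hσ₀.le hR.le hr0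
    have hαβ : ‖alphaPML σ₀ R r / betaPML σ₀ R r‖ ≤ 1 + σ₀ := by
      rw [norm_div]
      calc ‖alphaPML σ₀ R r‖ / ‖betaPML σ₀ R r‖ ≤ ‖alphaPML σ₀ R r‖ / 1 :=
            div_le_div_of_nonneg_left (norm_nonneg _) one_pos (norm_beta_ge σ₀ R r)
        _ ≤ 1 + σ₀ := by rw [div_one]; exact norm_alpha_le hσ₀.le r
    have hα : ‖alphaPML σ₀ R r‖ ≤ 1 + σ₀ := norm_alpha_le hσ₀.le r
    have hβ : ‖betaPML σ₀ R r‖ ≤ 1 + σ₀ := norm_beta_le hσ₀.le hR.le hr0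
    have hc1 : (0:ℝ) ≤ ‖v' r‖ ^ 2 := sq_nonneg _
    have hc2 : (0:ℝ) ≤ ‖v r‖ ^ 2 := sq_nonneg _
    have h1σ : (0:ℝ) ≤ 1 + σ₀ := by linarith
    have e1 : ‖betaPML σ₀ R r / alphaPML σ₀ R r * (r : ℂ) * ((‖v' r‖ ^ 2 : ℝ) : ℂ)‖ ≤
        (1 + σ₀) * (r * ‖v' r‖ ^ 2) := by
      rw [norm_mul, norm_mul, Complex.norm_real, Complex.norm_real, Real.norm_eq_abs,
        Real.norm_eq_abs, abs_of_pos hr0, abs_of_nonneg hc1]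
      calc ‖betaPML σ₀ R r / alphaPML σ₀ R r‖ * r * ‖v' r‖ ^ 2 ≤ (1 + σ₀) * r * ‖v' r‖ ^ 2 :=
            mul_le_mul_of_nonneg_right (mul_le_mul_of_nonneg_right hβα hr0.le) hc1
        _ = (1 + σ₀) * (r * ‖v' r‖ ^ 2) := by ring
    have eX : ‖((ν ^ 2 : ℝ) : ℂ) / (r : ℂ) * (alphaPML σ₀ R r / betaPML σ₀ R r)‖ ≤
        ν ^ 2 / r * (1 + σ₀) := by
      rw [norm_mul, norm_div, Complex.norm_real, Complex.norm_real, Real.norm_eq_abs,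
        Real.norm_eq_abs, abs_of_pos hr0, abs_of_nonneg (sq_nonneg ν)]
      exact mul_le_mul_of_nonneg_left hαβ (by positivity)
    have eY : ‖((k ^ 2 : ℝ) : ℂ) * alphaPML σ₀ R r * betaPML σ₀ R r * (r : ℂ)‖ ≤
        k ^ 2 * (1 + σ₀) ^ 2 * r := by
      rw [norm_mul, norm_mul, norm_mul, Complex.norm_real, Complex.norm_real, Real.norm_eq_abs,
        Real.norm_eq_abs, abs_of_pos hr0, abs_of_nonneg (sq_nonneg k)]
      have hprod : ‖alphaPML σ₀ R r‖ * ‖betaPML σ₀ R r‖ ≤ (1 + σ₀) * (1 + σ₀) :=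
        mul_le_mul hα hβ (norm_nonneg _) h1σ
      have h2 : k ^ 2 * (‖alphaPML σ₀ R r‖ * ‖betaPML σ₀ R r‖) ≤
          k ^ 2 * ((1 + σ₀) * (1 + σ₀)) := mul_le_mul_of_nonneg_left hprod (sq_nonneg k)
      have h3 := mul_le_mul_of_nonneg_right h2 hr0.le
      nlinarith [h3]
    have e2 : ‖(((ν ^ 2 : ℝ) : ℂ) / (r : ℂ) * (alphaPML σ₀ R r / betaPML σ₀ R r) -
          ((k ^ 2 : ℝ) : ℂ) * alphaPML σ₀ R r * betaPML σ₀ R r * (r : ℂ)) *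
          ((‖v r‖ ^ 2 : ℝ) : ℂ)‖ ≤
        (ν ^ 2 / r * (1 + σ₀) + k ^ 2 * (1 + σ₀) ^ 2 * r) * ‖v r‖ ^ 2 := by
      rw [norm_mul, Complex.norm_real, Real.norm_eq_abs, abs_of_nonneg hc2]
      exact mul_le_mul_of_nonneg_right ((norm_sub_le _ _).trans (add_le_add eX eY)) hc2
    calc ‖F r‖ ≤ ‖betaPML σ₀ R r / alphaPML σ₀ R r * (r : ℂ) * ((‖v' r‖ ^ 2 : ℝ) : ℂ)‖ +
          ‖(((ν ^ 2 : ℝ) : ℂ) / (r : ℂ) * (alphaPML σ₀ R r / betaPML σ₀ R r) -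
            ((k ^ 2 : ℝ) : ℂ) * alphaPML σ₀ R r * betaPML σ₀ R r * (r : ℂ)) *
            ((‖v r‖ ^ 2 : ℝ) : ℂ)‖ := norm_add_le _ _
      _ ≤ (1 + σ₀) * (r * ‖v' r‖ ^ 2) +
          (ν ^ 2 / r * (1 + σ₀) + k ^ 2 * (1 + σ₀) ^ 2 * r) * ‖v r‖ ^ 2 := add_le_add e1 e2
      _ = G r := by simp only [hGdef]; field_simp
  have hFint : IntegrableOn F (Set.Ioc 0 Rh) := by
    refine Integrable.mono' hGint hFm ?_
    filter_upwards [ae_restrict_mem measurableSet_Ioc] with r hr using hbound r hr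
  rw [show (∫ r in Set.Ioc 0 Rh, F r).re = RCLike.re (∫ r in Set.Ioc 0 Rh, F r) from rfl,
    ← integral_re hFint]
  have hLHSint : IntegrableOn
      (fun r => 1 / (1 + σ₀ ^ 2) * r * ‖v' r‖ ^ 2 +
        lamPML σ₀ R Rh * k * (r * ‖v r‖ ^ 2)) (Set.Ioc 0 Rh) := by
    have heq : (fun r => 1 / (1 + σ₀ ^ 2) * r * ‖v' r‖ ^ 2 +
        lamPML σ₀ R Rh * k * (r * ‖v r‖ ^ 2)) =
        fun r => 1 / (1 + σ₀ ^ 2) * (r * ‖v' r‖ ^ 2) +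
          lamPML σ₀ R Rh * k * (r * ‖v r‖ ^ 2) := by
      funext r; ring
    rw [heq]
    exact (hint1.const_mul _).add (hint3.const_mul _)
  refine setIntegral_mono_on hLHSint hFint.re measurableSet_Ioc ?_
  intro r hr
  have hre := re_formula σ₀ R r ν k (‖v' r‖ ^ 2) (‖v r‖ ^ 2) (ne_of_gt hr.1)
  simp only [RCLike.re_to_complex, hFdef]
  rw [hre]
  have hA := coeffA (σ₀ := σ₀) (R := R) (r := r) hσ₀.le hR.le hr.1
  have hB := coeffB hk hσ₀ hσ3 hR hRRh hν hr
  have hc1 : (0:ℝ) ≤ ‖v' r‖ ^ 2 := sq_nonneg _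
  have hc2 : (0:ℝ) ≤ ‖v r‖ ^ 2 := sq_nonneg _
  have h1 : 1 / (1 + σ₀ ^ 2) * r * ‖v' r‖ ^ 2 ≤
      (1 + sigPML σ₀ R r * delPML σ₀ R r) / (1 + (sigPML σ₀ R r) ^ 2) * r * ‖v' r‖ ^ 2 := by
    apply mul_le_mul_of_nonneg_right _ hc1
    exact mul_le_mul_of_nonneg_right hA hr.1.le
  have h2 : lamPML σ₀ R Rh * k * (r * ‖v r‖ ^ 2) ≤
      ((ν ^ 2 / r) * ((1 + sigPML σ₀ R r * delPML σ₀ R r) / (1 + (delPML σ₀ R r) ^ 2)) -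
        k ^ 2 * r * (1 - sigPML σ₀ R r * delPML σ₀ R r)) * ‖v r‖ ^ 2 := by
    have := mul_le_mul_of_nonneg_right hB hc2
    calc lamPML σ₀ R Rh * k * (r * ‖v r‖ ^ 2) = lamPML σ₀ R Rh * k * r * ‖v r‖ ^ 2 := by ring
      _ ≤ _ := this
  linarith


end
end

section
/- Monotonicity claim in the proof of Lemma 3.2(i): Assume σ₀ ≥ √3. Then for every r ∈ (0, R̂], one has ((1 + δ(r)²) / (1 + σ(r)δ(r))) · (1 − σ(r)δ(r)) · r² ≤ R²; that is, the function g(r) = ((1+δ(r)²)/(1+σ(r)δ(r)))(1−σ(r)δ(r)) k² r² attains its maximum on (0, R̂] at r = R, where g(R) = k²R². -/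
open MeasureTheory

noncomputable section

/-- Monotonicity claim in the proof of Lemma 3.2(i): if `σ₀ ≥ √3`, then for every
`r ∈ (0, R̂]`, `((1+δ(r)²)/(1+σ(r)δ(r)))(1−σ(r)δ(r)) r² ≤ R²`; i.e. the function
`g(r) = ((1+δ²)/(1+σδ))(1−σδ)k²r²` attains its maximum on `(0, R̂]` at `r = R`,
where `g(R) = k²R²`. -/
theorem g_max_at_R (k σ₀ R Rh : ℝ)
    (hk : 0 < k) (hσ₀ : 0 < σ₀) (hσ₀' : Real.sqrt 3 ≤ σ₀) (hR : 0 < R) (hRRh : R < Rh) :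
    (∀ r ∈ Set.Ioc (0 : ℝ) Rh,
        ((1 + delPML σ₀ R r ^ 2) / (1 + sigPML σ₀ R r * delPML σ₀ R r)) *
            (1 - sigPML σ₀ R r * delPML σ₀ R r) * r ^ 2 ≤ R ^ 2) ∧
      ((1 + delPML σ₀ R R ^ 2) / (1 + sigPML σ₀ R R * delPML σ₀ R R)) *
          (1 - sigPML σ₀ R R * delPML σ₀ R R) * k ^ 2 * R ^ 2 = k ^ 2 * R ^ 2 := by
  have hs : 3 ≤ σ₀ ^ 2 := by
    have := Real.sq_sqrt (by norm_num : (3:ℝ) ≥ 0)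
    nlinarith [Real.sqrt_nonneg 3]
  constructor
  · rintro r ⟨hr0, hrRh⟩
    by_cases h : r ≤ R
    · simp only [sigPML, delPML, if_pos h]
      nlinarith
    · push_neg at h
      simp only [sigPML, delPML, if_neg (not_le.mpr h)]
      set d : ℝ := σ₀ * (r - R) / r with hd
      have hdpos : 0 ≤ d := by
        apply div_nonneg _ hr0.le
        nlinarith
      have hden : (0:ℝ) < 1 + σ₀ * d := by nlinarith
      rw [div_mul_eq_mul_div, div_mul_eq_mul_div, div_le_iff₀ hden,
        ← mul_le_mul_iff_of_pos_right hr0]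
      have hu : (0:ℝ) < r - R := sub_pos.mpr h
      have key : (r ^ 2 + σ₀ ^ 2 * (r - R) ^ 2) * (r - σ₀ ^ 2 * (r - R)) ≤
          R ^ 2 * (r + σ₀ ^ 2 * (r - R)) := by
        have e : R ^ 2 * (r + σ₀ ^ 2 * (r - R)) -
            (r ^ 2 + σ₀ ^ 2 * (r - R) ^ 2) * (r - σ₀ ^ 2 * (r - R)) =
            2 * (σ₀ ^ 2 - 1) * R ^ 2 * (r - R) + (σ₀ ^ 2 - 3) * (R * (r - R) ^ 2) +
            (σ₀ ^ 2 * σ₀ ^ 2 - 1) * (r - R) ^ 3 := by ring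
        nlinarith [mul_nonneg (by nlinarith : (0:ℝ) ≤ 2 * (σ₀ ^ 2 - 1) * R ^ 2) hu.le,
          mul_nonneg (by linarith : (0:ℝ) ≤ σ₀ ^ 2 - 3)
            (mul_nonneg hR.le (sq_nonneg (r - R))),
          mul_nonneg (by nlinarith : (0:ℝ) ≤ σ₀ ^ 2 * σ₀ ^ 2 - 1)
            (pow_nonneg hu.le 3)]
      calc (1 + d ^ 2) * (1 - σ₀ * d) * r ^ 2 * r
          = (r ^ 2 + σ₀ ^ 2 * (r - R) ^ 2) * (r - σ₀ ^ 2 * (r - R)) := by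
            rw [hd]; field_simp
        _ ≤ R ^ 2 * (r + σ₀ ^ 2 * (r - R)) := key
        _ = R ^ 2 * (1 + σ₀ * d) * r := by rw [hd]; field_simp
  · simp [sigPML, delPML]
end
end
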